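/- If f is a weakly holomorphic modular form of weight −k for SL₂(ℤ) (k ≥ 0), then its (k+1)-st derivative f^{(k+1)} is a weakly holomorphic modular form of weight k+2. -/

import Mathlib

/-- The open upper half plane, as a subset of `ℂ`. -/
def UHP : Set ℂ := {z : ℂ | 0 < z.im}

/-- `f` is holomorphic on the upper half plane and transforms with weight `m ∈ ℤ`
under `SL₂(ℤ)`. -/
def IsWeaklyModularOfWeight (m : ℤ) (f : ℂ → ℂ) : Prop :=
  DifferentiableOn ℂ f UHP ∧
    ∀ g : Matrix.SpecialLinearGroup (Fin 2) ℤ, ∀ τ ∈ UHP,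
      f ((((g 0 0 : ℤ) : ℂ) * τ + ((g 0 1 : ℤ) : ℂ)) /
          (((g 1 0 : ℤ) : ℂ) * τ + ((g 1 1 : ℤ) : ℂ))) =
        (((g 1 0 : ℤ) : ℂ) * τ + ((g 1 1 : ℤ) : ℂ)) ^ m * f τ

/-- `f` is meromorphic at the cusp `∞`: it grows at most like `e^{2πN·Im τ}` as
`Im τ → ∞` (finitely many negative Fourier coefficients). -/
def MeromorphicAtCusp (f : ℂ → ℂ) : Prop :=
  ∃ N : ℕ, ∃ C : ℝ, ∀ τ ∈ UHP, 1 ≤ τ.im →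
    ‖f τ‖ ≤ C * Real.exp (2 * Real.pi * N * τ.im)

open Set Finset Metric Real Nat NNReal

section Helpers

lemma UHP_open : IsOpen UHP := isOpen_lt continuous_const Complex.continuous_im

lemma idw_eqOn (f : ℂ → ℂ) (n : ℕ) :
    Set.EqOn (iteratedDerivWithin n f UHP) (iteratedDeriv n f) UHP := by
  induction n with
  | zero => simp [iteratedDerivWithin_zero, iteratedDeriv_zero]; exact fun x _ => rfl
  | succ n ih =>
    intro x hx
    rw [iteratedDerivWithin_succ,
      derivWithin_of_isOpen UHP_open hx, iteratedDeriv_succ]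
    apply Filter.EventuallyEq.deriv_eq
    filter_upwards [UHP_open.mem_nhds hx] with a ha using ih ha

lemma analytic_iter {f : ℂ → ℂ} (hf : DifferentiableOn ℂ f UHP) (n : ℕ) :
    AnalyticOnNhd ℂ (iteratedDeriv n f) UHP := by
  induction n with
  | zero => simpa [iteratedDeriv_zero] using hf.analyticOnNhd UHP_open
  | succ n ih => rw [iteratedDeriv_succ]; exact ih.deriv

lemma hasDerivAt_iter {f : ℂ → ℂ} (hf : DifferentiableOn ℂ f UHP) (n : ℕ) {τ : ℂ}
    (hτ : τ ∈ UHP) :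
    HasDerivAt (iteratedDeriv n f) (iteratedDeriv (n+1) f τ) τ := by
  rw [iteratedDeriv_succ]
  exact ((analytic_iter hf n τ hτ).differentiableAt).hasDerivAt

section moebius
variable {a b c d : ℂ} (hdet : a * d - b * c = 1)
  (ha : a.im = 0) (hb : b.im = 0) (hc : c.im = 0) (hd : d.im = 0)

set_option linter.unusedSectionVars false

include hdet ha hb hc hd in
lemma denom_ne {τ : ℂ} (hτ : τ ∈ UHP) : c * τ + d ≠ 0 := by
  intro h
  have him : c.re * τ.im = 0 := by
    have := congrArg Complex.im h
    simpa [Complex.add_im, Complex.mul_im, hc, hd] using this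
  have hc0 : c.re = 0 := by
    rcases mul_eq_zero.1 him with h' | h'
    · exact h'
    · exact absurd h' (ne_of_gt hτ)
  have hcc : c = 0 := Complex.ext hc0 hc
  have hre : d = 0 := by simpa [hcc] using h
  rw [hcc, hre] at hdet
  simp at hdet

include hdet ha hb hc hd in
lemma moebius_mem {τ : ℂ} (hτ : τ ∈ UHP) : (a * τ + b) / (c * τ + d) ∈ UHP := by
  have hne : c * τ + d ≠ 0 := denom_ne hdet ha hb hc hd hτ
  have h1 : ((a * τ + b) / (c * τ + d)).im = τ.im / Complex.normSq (c * τ + d) := by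
    rw [Complex.div_im, div_sub_div_same]
    congr 1
    have h2 : a.re * d.re - b.re * c.re = 1 := by
      have := congrArg Complex.re hdet
      simpa [Complex.sub_re, Complex.mul_re, ha, hb, hc, hd] using this
    simp only [Complex.add_im, Complex.add_re, Complex.mul_im, Complex.mul_re, ha, hb, hc, hd]
    linear_combination τ.im * h2
  have : 0 < τ.im / Complex.normSq (c * τ + d) :=
    div_pos hτ (by simpa [Complex.normSq_pos] using hne)
  simpa [UHP, h1] using this

include hdet in
lemma moebius_hasDerivAt {τ : ℂ} (hne : c * τ + d ≠ 0) :
    HasDerivAt (fun τ => (a * τ + b) / (c * τ + d)) (((c * τ + d) ^ 2)⁻¹) τ := by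
  have h1 : HasDerivAt (fun τ : ℂ => a * τ + b) a τ := by
    simpa using ((hasDerivAt_id τ).const_mul a).add_const b
  have h2 : HasDerivAt (fun τ : ℂ => c * τ + d) c τ := by
    simpa using ((hasDerivAt_id τ).const_mul c).add_const d
  have := h1.div h2 hne
  have hnum : a * (c * τ + d) - (a * τ + b) * c = 1 := by linear_combination hdet
  rw [hnum, one_div] at this
  exact this
end moebius

lemma Jmerge {J : ℂ} (hne : J ≠ 0) (m : ℤ) : J ^ (m - 1) * J ^ (2:ℕ) = J ^ (m + 1) := by
  rw [← zpow_natCast J 2, ← zpow_add₀ hne]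
  congr 1
  ring

lemma Jmerge2 {J : ℂ} (hne : J ≠ 0) (m : ℤ) : J ^ m * J ^ (2:ℕ) = J ^ (m + 2) := by
  rw [← zpow_natCast J 2, ← zpow_add₀ hne]
  congr 1

lemma coeff_id (w : ℂ) (n i : ℕ) (hi : i < n) :
    ((n.choose (i+1) : ℂ)) * (w + n + (i+1)) + (n.choose i : ℂ) * (w + i) =
      ((n+1).choose (i+1) : ℂ) * (w + n) := by
  have hp : (((n+1).choose (i+1) : ℕ) : ℂ) = (n.choose i : ℂ) + (n.choose (i+1) : ℂ) := by
    rw [Nat.choose_succ_succ]; push_cast; ring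
  have h1 : ((n.choose (i+1) : ℕ) : ℂ) * (i+1) = (n.choose i : ℂ) * ((n : ℂ) - i) := by
    have h2 : ((n.choose (i+1) * (i+1) : ℕ) : ℂ) = ((n.choose i * (n - i) : ℕ) : ℂ) :=
      congrArg (Nat.cast : ℕ → ℂ) (Nat.choose_succ_right_eq n i)
    push_cast [Nat.cast_sub hi.le] at h2
    exact_mod_cast h2
  linear_combination -(w + (n:ℂ)) * hp + h1

noncomputable section

def bolP (w : ℤ) (r m : ℕ) : ℂ := ∏ i ∈ Finset.Ico r m, ((w:ℂ) + (i:ℂ))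

def bolT (w : ℤ) (n : ℕ) (c J : ℂ) (g : ℕ → ℂ) (r : ℕ) : ℂ :=
  (n.choose r : ℂ) * bolP w r n * c ^ (n - r) * J ^ (w + (n:ℤ) + (r:ℤ)) * g r

def bolX (w : ℤ) (n : ℕ) (c J : ℂ) (g : ℕ → ℂ) (r : ℕ) : ℂ :=
  (n.choose r : ℂ) * bolP w r n * c ^ (n - r) *
    (((w + (n:ℤ) + (r:ℤ) : ℤ) : ℂ) * J ^ (w + (n:ℤ) + (r:ℤ) - 1) * c) * g r

def bolY (w : ℤ) (n : ℕ) (c J : ℂ) (g : ℕ → ℂ) (r : ℕ) : ℂ :=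
  (n.choose r : ℂ) * bolP w r n * c ^ (n - r) * J ^ (w + (n:ℤ) + (r:ℤ)) * g (r+1)

def bolU (w : ℤ) (n : ℕ) (c J : ℂ) (g : ℕ → ℂ) (r : ℕ) : ℂ :=
  (n.choose r : ℂ) * bolP w r n * c ^ (n - r) *
    (((w + (n:ℤ) + (r:ℤ) : ℤ) : ℂ) * c) * J ^ (w + (n:ℤ) + (r:ℤ) + 1) * g r

def bolV (w : ℤ) (n : ℕ) (c J : ℂ) (g : ℕ → ℂ) (r : ℕ) : ℂ :=
  (n.choose r : ℂ) * bolP w r n * c ^ (n - r) * J ^ (w + (n:ℤ) + (r:ℤ) + 2) * g (r+1)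

lemma sum_algebra (w : ℤ) (n : ℕ) (c J : ℂ) (hne : J ≠ 0) (g : ℕ → ℂ) :
    (∑ r ∈ Finset.range (n+1), (bolX w n c J g r + bolY w n c J g r)) * J ^ 2
      = ∑ r ∈ Finset.range (n+2), bolT w (n+1) c J g r := by
  rw [Finset.sum_mul]
  have hL : ∀ r ∈ Finset.range (n+1),
      (bolX w n c J g r + bolY w n c J g r) * J ^ 2 = bolU w n c J g r + bolV w n c J g r := by
    intro r _
    unfold bolX bolY bolU bolV
    linear_combination
      ((n.choose r : ℂ) * bolP w r n * c ^ (n - r) * ((w + (n:ℤ) + (r:ℤ) : ℤ) : ℂ) * c * g r) *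
          Jmerge hne (w + (n:ℤ) + (r:ℤ)) +
        ((n.choose r : ℂ) * bolP w r n * c ^ (n - r) * g (r+1)) *
          Jmerge2 hne (w + (n:ℤ) + (r:ℤ))
  rw [Finset.sum_congr rfl hL, Finset.sum_add_distrib,
    Finset.sum_range_succ' (bolU w n c J g) n, Finset.sum_range_succ (bolV w n c J g) n,
    Finset.sum_range_succ' (bolT w (n+1) c J g) (n+1),
    Finset.sum_range_succ (fun i => bolT w (n+1) c J g (i+1)) n]
  have h0 : bolU w n c J g 0 = bolT w (n+1) c J g 0 := by
    unfold bolU bolT bolP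
    rw [Finset.prod_Ico_succ_top (Nat.zero_le n)]
    have he : J ^ (w + (n:ℤ) + ((0:ℕ):ℤ) + 1) = J ^ (w + ((n+1:ℕ):ℤ) + ((0:ℕ):ℤ)) := by
      congr 1; push_cast; ring
    rw [he]
    push_cast
    simp only [Nat.choose_zero_right, Nat.sub_zero, Nat.cast_one]
    ring
  have hn : bolV w n c J g n = bolT w (n+1) c J g (n+1) := by
    unfold bolV bolT bolP
    have he : J ^ (w + (n:ℤ) + ((n:ℕ):ℤ) + 2) = J ^ (w + ((n+1:ℕ):ℤ) + ((n+1:ℕ):ℤ)) := by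
      congr 1; push_cast; ring
    rw [he]
    simp [Nat.choose_self, Finset.Ico_self]
  have hmid : ∀ i ∈ Finset.range n,
      bolU w n c J g (i+1) + bolV w n c J g i = bolT w (n+1) c J g (i+1) := by
    intro i hi
    have hi' : i < n := Finset.mem_range.1 hi
    unfold bolU bolV bolT bolP
    rw [Finset.prod_Ico_succ_top (by omega : i + 1 ≤ n),
      Finset.prod_eq_prod_Ico_succ_bot hi']
    have hc1 : c ^ (n - i) = c ^ (n - (i+1)) * c := by
      rw [← pow_succ]; congr 1; omega
    have hc2 : c ^ (n + 1 - (i+1)) = c ^ (n - (i+1)) * c := by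
      rw [← pow_succ]; congr 1; omega
    have he1 : J ^ (w + (n:ℤ) + ((i+1:ℕ):ℤ) + 1) = J ^ (w + ((n+1:ℕ):ℤ) + ((i+1:ℕ):ℤ)) := by
      congr 1; push_cast; ring
    have he2 : J ^ (w + (n:ℤ) + ((i:ℕ):ℤ) + 2) = J ^ (w + ((n+1:ℕ):ℤ) + ((i+1:ℕ):ℤ)) := by
      congr 1; push_cast; ring
    rw [hc1, hc2, he1, he2]
    push_cast
    linear_combination
      ((∏ x ∈ Finset.Ico (i+1) n, ((w:ℂ) + (x:ℂ))) * c ^ (n - (i+1)) * c *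
        J ^ (w + ((n:ℤ)+1) + ((i:ℤ)+1)) * g (i+1)) * coeff_id (w:ℂ) n i hi'
  rw [← Finset.sum_congr rfl hmid, Finset.sum_add_distrib, h0, hn]
  ring

lemma bol {f : ℂ → ℂ} (hf : DifferentiableOn ℂ f UHP) {a b c d : ℂ}
    (hdet : a * d - b * c = 1) (ha : a.im = 0) (hb : b.im = 0) (hc : c.im = 0) (hd : d.im = 0)
    (w : ℤ) (hbase : ∀ τ ∈ UHP, f ((a * τ + b) / (c * τ + d)) = (c * τ + d) ^ w * f τ)
    (n : ℕ) : ∀ τ ∈ UHP,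
      iteratedDeriv n f ((a * τ + b) / (c * τ + d)) =
        ∑ r ∈ Finset.range (n+1), bolT w n c (c * τ + d) (fun r => iteratedDeriv r f τ) r := by
  induction n with
  | zero =>
    intro τ hτ
    rw [Finset.sum_range_one]
    simp only [bolT, bolP, Nat.choose_self, Finset.Ico_self, Finset.prod_empty, Nat.cast_one,
      Nat.sub_zero, pow_zero, Nat.cast_zero, add_zero, one_mul, mul_one, iteratedDeriv_zero]
    exact hbase τ hτ
  | succ n ih =>
    intro τ hτ
    have hne : c * τ + d ≠ 0 := denom_ne hdet ha hb hc hd hτ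
    have hM : (a * τ + b) / (c * τ + d) ∈ UHP := moebius_mem hdet ha hb hc hd hτ
    have haff : HasDerivAt (fun τ : ℂ => c * τ + d) c τ := by
      simpa using ((hasDerivAt_id τ).const_mul c).add_const d
    have hF : HasDerivAt (fun τ => iteratedDeriv n f ((a * τ + b) / (c * τ + d)))
        (iteratedDeriv (n+1) f ((a * τ + b) / (c * τ + d)) * ((c * τ + d) ^ 2)⁻¹) τ :=
      (hasDerivAt_iter hf n hM).comp (h := fun τ => (a * τ + b) / (c * τ + d)) τ
        (moebius_hasDerivAt hdet hne)
    have hG : HasDerivAt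
        (fun τ' => ∑ r ∈ Finset.range (n+1),
          bolT w n c (c * τ' + d) (fun r => iteratedDeriv r f τ') r)
        (∑ r ∈ Finset.range (n+1),
          (bolX w n c (c * τ + d) (fun r => iteratedDeriv r f τ) r
            + bolY w n c (c * τ + d) (fun r => iteratedDeriv r f τ) r)) τ := by
      apply HasDerivAt.fun_sum
      intro r _
      simp only [bolT, bolX, bolY]
      exact ((((hasDerivAt_zpow (w + (n:ℤ) + (r:ℤ)) _ (Or.inl hne)).comp τ haff).const_mul
        ((n.choose r : ℂ) * bolP w r n * c ^ (n - r))).mul (hasDerivAt_iter hf r hτ))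
    have heq : (fun τ => iteratedDeriv n f ((a * τ + b) / (c * τ + d))) =ᶠ[nhds τ]
        (fun τ' => ∑ r ∈ Finset.range (n+1),
          bolT w n c (c * τ' + d) (fun r => iteratedDeriv r f τ') r) := by
      filter_upwards [UHP_open.mem_nhds hτ] with x hx using ih x hx
    have hu : iteratedDeriv (n+1) f ((a * τ + b) / (c * τ + d)) * ((c * τ + d) ^ 2)⁻¹
        = ∑ r ∈ Finset.range (n+1),
          (bolX w n c (c * τ + d) (fun r => iteratedDeriv r f τ) r
            + bolY w n c (c * τ + d) (fun r => iteratedDeriv r f τ) r) :=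
      hF.unique (hG.congr_of_eventuallyEq heq)
    have h2 : ((c * τ + d) ^ 2 : ℂ) ≠ 0 := pow_ne_zero _ hne
    have hkey : iteratedDeriv (n+1) f ((a * τ + b) / (c * τ + d))
        = (∑ r ∈ Finset.range (n+1),
          (bolX w n c (c * τ + d) (fun r => iteratedDeriv r f τ) r
            + bolY w n c (c * τ + d) (fun r => iteratedDeriv r f τ) r)) * (c * τ + d) ^ 2 := by
      calc iteratedDeriv (n+1) f ((a * τ + b) / (c * τ + d))
          = iteratedDeriv (n+1) f ((a * τ + b) / (c * τ + d)) *
            (((c * τ + d) ^ 2)⁻¹ * (c * τ + d) ^ 2) := by rw [inv_mul_cancel₀ h2, mul_one]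
        _ = _ := by rw [← mul_assoc, hu]
    rw [hkey, sum_algebra w n c _ hne]

lemma bol_collapse (k : ℕ) (c J : ℂ) (g : ℕ → ℂ) :
    ∑ r ∈ Finset.range (k+2), bolT (-(k:ℤ)) (k+1) c J g r = J ^ ((k:ℤ)+2) * g (k+1) := by
  rw [Finset.sum_range_succ]
  have hz : ∀ r ∈ Finset.range (k+1), bolT (-(k:ℤ)) (k+1) c J g r = 0 := by
    intro r hr
    have hr' : r < k+1 := Finset.mem_range.1 hr
    have hP : bolP (-(k:ℤ)) r (k+1) = 0 := by
      apply Finset.prod_eq_zero (i := k) (Finset.mem_Ico.2 ⟨by omega, by omega⟩)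
      push_cast; ring
    simp [bolT, hP]
  rw [Finset.sum_eq_zero hz, zero_add]
  have he : J ^ (-(k:ℤ) + ((k+1:ℕ):ℤ) + ((k+1:ℕ):ℤ)) = J ^ ((k:ℤ)+2) := by
    congr 1; push_cast; ring
  simp only [bolT, bolP, Nat.choose_self, Finset.Ico_self, Finset.prod_empty, Nat.cast_one,
    Nat.sub_self, pow_zero, one_mul, mul_one, he]

end

lemma circleMap_im' (c : ℂ) (R θ : ℝ) : (circleMap c R θ).im = c.im + R * Real.sin θ := by
  simp [circleMap, Complex.add_im, Complex.mul_im, Complex.exp_ofReal_mul_I_im,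
    Complex.exp_ofReal_mul_I_re]

lemma block_bound {f : ℂ → ℂ} (hf : ContinuousOn f UHP) :
    ∃ M : ℝ, ∀ z : ℂ, z.re ∈ Icc (0:ℝ) 1 → z.im ∈ Icc (1/2 : ℝ) (3/2 : ℝ) → ‖f z‖ ≤ M := by
  set K : Set ℂ := {z : ℂ | z.re ∈ Icc (0:ℝ) 1 ∧ z.im ∈ Icc (1/2 : ℝ) (3/2)} with hK
  have hKsub : K ⊆ UHP := fun z hz => by
    have := hz.2.1; simp only [UHP, mem_setOf_eq]; linarith
  have hclosed : IsClosed K := by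
    have : K = Complex.re ⁻¹' Icc 0 1 ∩ Complex.im ⁻¹' Icc (1/2) (3/2) := rfl
    rw [this]
    exact (isClosed_Icc.preimage Complex.continuous_re).inter
      (isClosed_Icc.preimage Complex.continuous_im)
  have hbdd : Bornology.IsBounded K := by
    apply (isBounded_closedBall (x := (0:ℂ)) (r := 3)).subset
    intro z hz
    simp only [mem_closedBall, Complex.dist_eq, sub_zero]
    calc ‖z‖ ≤ |z.re| + |z.im| := Complex.norm_le_abs_re_add_abs_im z
      _ ≤ 1 + 3/2 := by
          obtain ⟨⟨a1, a2⟩, b1, b2⟩ := hz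
          have : |z.re| ≤ 1 := abs_le.2 ⟨by linarith, a2⟩
          have : |z.im| ≤ 3/2 := abs_le.2 ⟨by linarith, b2⟩
          linarith
      _ ≤ 3 := by norm_num
  have hcpt : IsCompact K := Metric.isCompact_of_isClosed_isBounded hclosed hbdd
  obtain ⟨M, hM⟩ := hcpt.exists_bound_of_continuousOn (hf.mono hKsub)
  exact ⟨M, fun z h1 h2 => hM z ⟨h1, h2⟩⟩

lemma cauchy_step {f : ℂ → ℂ} (hdiff : DifferentiableOn ℂ f UHP)
    {N : ℕ} {C2 : ℝ} (hC2 : 0 ≤ C2)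
    (hhalf : ∀ z : ℂ, 1/2 ≤ z.im → ‖f z‖ ≤ C2 * Real.exp (2*π*N*z.im)) (n : ℕ)
    {τ : ℂ} (h1 : 1 ≤ τ.im) :
    ‖iteratedDeriv n f τ‖ ≤
      (n ! : ℝ) * 2^n * (C2 * Real.exp (π * N)) * Real.exp (2*π*N*τ.im) := by
  have hsub : closedBall τ (1/2 : ℝ) ⊆ {z : ℂ | 1/2 ≤ z.im} := by
    intro z hz
    have h2 : |(z - τ).im| ≤ ‖z - τ‖ := Complex.abs_im_le_norm _
    rw [Complex.sub_im] at h2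
    have h3 : ‖z - τ‖ ≤ 1/2 := by
      rw [← Complex.dist_eq]; exact mem_closedBall.1 hz
    have := abs_le.1 (h2.trans h3)
    simp only [mem_setOf_eq]; linarith [this.1]
  have hsubU : closedBall τ (1/2 : ℝ) ⊆ UHP := fun z hz =>
    lt_of_lt_of_le (by norm_num : (0:ℝ) < 1/2) (hsub hz)
  have hcoe : (((1/2 : ℝ≥0)) : ℝ) = (1/2 : ℝ) := by norm_num
  have hdB : DifferentiableOn ℂ f (closedBall τ (((1/2 : ℝ≥0)) : ℝ)) := by
    rw [hcoe]; exact hdiff.mono hsubU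
  have hp : HasFPowerSeriesOnBall f (cauchyPowerSeries f τ ((1/2 : ℝ≥0) : ℝ)) τ (1/2 : ℝ≥0) :=
    hdB.hasFPowerSeriesOnBall (by norm_num)
  have hiter : ‖iteratedDeriv n f τ‖
      = (n ! : ℝ) * ‖cauchyPowerSeries f τ ((1/2 : ℝ≥0) : ℝ) n fun _ => 1‖ := by
    rw [iteratedDeriv_eq_iteratedFDeriv, ← hp.factorial_smul (y := (1:ℂ)) n, nsmul_eq_mul,
      norm_mul, Complex.norm_natCast]
  set B : ℝ := C2 * Real.exp (2*π*N*(τ.im + 1/2)) with hB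
  have hBpos : 0 ≤ B := by positivity
  have hpt : ∀ θ ∈ Icc (0:ℝ) (2*π), ‖f (circleMap τ (1/2) θ)‖ ≤ B := by
    intro θ _
    have him : (circleMap τ (1/2) θ).im = τ.im + 1/2 * Real.sin θ := circleMap_im' _ _ _
    have hs := Real.neg_one_le_sin θ
    have hs' := Real.sin_le_one θ
    have hge : 1/2 ≤ (circleMap τ (1/2) θ).im := by rw [him]; nlinarith
    have hle : (circleMap τ (1/2) θ).im ≤ τ.im + 1/2 := by rw [him]; nlinarith
    refine (hhalf _ hge).trans ?_
    rw [hB]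
    apply mul_le_mul_of_nonneg_left _ hC2
    apply Real.exp_le_exp.2
    have : (0:ℝ) ≤ 2*π*N := by positivity
    nlinarith
  have hcont : Continuous fun θ : ℝ => ‖f (circleMap τ (1/2) θ)‖ := by
    apply Continuous.norm
    apply hdiff.continuousOn.comp_continuous (continuous_circleMap τ (1/2))
    intro θ
    exact hsubU (circleMap_mem_closedBall τ (by norm_num) θ)
  have hint : (∫ θ in (0:ℝ)..2*π, ‖f (circleMap τ (1/2) θ)‖) ≤ 2*π*B := by
    have := intervalIntegral.integral_mono_on (by positivity : (0:ℝ) ≤ 2*π)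
      (hcont.intervalIntegrable 0 (2*π))
      ((intervalIntegrable_const : IntervalIntegrable (fun _ => B) MeasureTheory.volume 0 (2*π)))
      hpt
    rw [intervalIntegral.integral_const, smul_eq_mul] at this
    calc (∫ θ in (0:ℝ)..2*π, ‖f (circleMap τ (1/2) θ)‖) ≤ (2*π - 0) * B := this
      _ = 2*π*B := by ring
  have hpn := norm_cauchyPowerSeries_le f τ ((1/2 : ℝ≥0) : ℝ) n
  rw [hcoe] at hpn
  have happ : ‖cauchyPowerSeries f τ ((1/2 : ℝ≥0) : ℝ) n fun _ => 1‖
      ≤ ‖cauchyPowerSeries f τ ((1/2 : ℝ≥0) : ℝ) n‖ := by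
    have := (cauchyPowerSeries f τ ((1/2 : ℝ≥0) : ℝ) n).le_opNorm (fun _ => 1)
    simpa using this
  have habs : |(1/2 : ℝ)|⁻¹ ^ n = 2 ^ n := by
    rw [abs_of_pos (by norm_num : (0:ℝ) < 1/2)]; norm_num
  have hchain : ‖cauchyPowerSeries f τ ((1/2 : ℝ≥0) : ℝ) n‖ ≤ B * 2 ^ n := by
    refine hpn.trans ?_
    rw [habs]
    apply mul_le_mul_of_nonneg_right _ (by positivity)
    calc (2*π)⁻¹ * ∫ θ in (0:ℝ)..2*π, ‖f (circleMap τ (1/2) θ)‖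
        ≤ (2*π)⁻¹ * (2*π*B) := by
          apply mul_le_mul_of_nonneg_left hint (by positivity)
      _ = B := by field_simp
  have hBexp : B = C2 * Real.exp (π * N) * Real.exp (2*π*N*τ.im) := by
    rw [hB, show 2*π*(N:ℝ)*(τ.im + 1/2) = π*N + 2*π*N*τ.im by ring, Real.exp_add]
    ring
  calc ‖iteratedDeriv n f τ‖
      = (n ! : ℝ) * ‖cauchyPowerSeries f τ ((1/2 : ℝ≥0) : ℝ) n fun _ => 1‖ := hiter
    _ ≤ (n ! : ℝ) * (B * 2 ^ n) := by
        apply mul_le_mul_of_nonneg_left (happ.trans hchain) (by positivity)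
    _ = (n ! : ℝ) * 2^n * (C2 * Real.exp (π * N)) * Real.exp (2*π*N*τ.im) := by
        rw [hBexp]; ring

end Helpers

/-- If `f` is a weakly holomorphic modular form of weight `−k` for `SL₂(ℤ)` (`k ≥ 0`),
then its `(k+1)`-st derivative is a weakly holomorphic modular form of weight `k+2`. -/
theorem iteratedDeriv_of_weakly_modular (k : ℕ) (f : ℂ → ℂ)
    (hmod : IsWeaklyModularOfWeight (-(k : ℤ)) f)
    (hcusp : MeromorphicAtCusp f) :
    IsWeaklyModularOfWeight ((k : ℤ) + 2) (iteratedDerivWithin (k + 1) f UHP) ∧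
      MeromorphicAtCusp (iteratedDerivWithin (k + 1) f UHP) := by
  obtain ⟨hdiff, htrans⟩ := hmod
  constructor
  · constructor
    · exact ((analytic_iter hdiff (k+1)).differentiableOn).congr
        (fun x hx => idw_eqOn f (k+1) hx)
    · intro g τ hτ
      have ha : (((g 0 0 : ℤ) : ℂ)).im = 0 := Complex.intCast_im _
      have hb : (((g 0 1 : ℤ) : ℂ)).im = 0 := Complex.intCast_im _
      have hc : (((g 1 0 : ℤ) : ℂ)).im = 0 := Complex.intCast_im _
      have hd : (((g 1 1 : ℤ) : ℂ)).im = 0 := Complex.intCast_im _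
      have hdetZ : (g 0 0 : ℤ) * (g 1 1 : ℤ) - (g 0 1 : ℤ) * (g 1 0 : ℤ) = 1 := by
        have := g.prop
        rw [Matrix.det_fin_two] at this
        exact this
      have hdet : ((g 0 0 : ℤ) : ℂ) * ((g 1 1 : ℤ) : ℂ)
          - ((g 0 1 : ℤ) : ℂ) * ((g 1 0 : ℤ) : ℂ) = 1 := by exact_mod_cast hdetZ
      have hM : (((g 0 0 : ℤ) : ℂ) * τ + ((g 0 1 : ℤ) : ℂ)) /
          (((g 1 0 : ℤ) : ℂ) * τ + ((g 1 1 : ℤ) : ℂ)) ∈ UHP :=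
        moebius_mem hdet ha hb hc hd hτ
      rw [idw_eqOn f (k+1) hM, idw_eqOn f (k+1) hτ]
      rw [bol hdiff hdet ha hb hc hd (-(k:ℤ)) (htrans g) (k+1) τ hτ]
      exact bol_collapse k _ _ _
  · obtain ⟨N, C, hC⟩ := hcusp
    have hper : ∀ m : ℤ, ∀ τ ∈ UHP, f (τ + m) = f τ := by
      intro m τ hτ
      have hdetT : Matrix.det !![1, m; 0, 1] = 1 := by
        simp [Matrix.det_fin_two_of]
      set g : Matrix.SpecialLinearGroup (Fin 2) ℤ := ⟨!![1, m; 0, 1], hdetT⟩ with hg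
      have := htrans g τ hτ
      have e00 : g 0 0 = 1 := rfl
      have e01 : g 0 1 = m := rfl
      have e10 : g 1 0 = 0 := rfl
      have e11 : g 1 1 = 1 := rfl
      rw [e00, e01, e10, e11] at this
      simpa using this
    obtain ⟨M, hM⟩ := block_bound hdiff.continuousOn
    set C2 : ℝ := max C (max M 0) with hC2def
    have hC2 : 0 ≤ C2 := le_max_of_le_right (le_max_right M 0)
    have hhalf : ∀ z : ℂ, 1/2 ≤ z.im → ‖f z‖ ≤ C2 * Real.exp (2*π*N*z.im) := by
      intro z hz
      have hzU : z ∈ UHP := lt_of_lt_of_le (by norm_num : (0:ℝ) < 1/2) hz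
      have hexp1 : (1:ℝ) ≤ Real.exp (2*π*N*z.im) := by
        apply Real.one_le_exp
        have h0 : (0:ℝ) ≤ 2*π*N := by positivity
        nlinarith
      by_cases hone : 1 ≤ z.im
      · refine (hC z hzU hone).trans ?_
        exact mul_le_mul_of_nonneg_right (le_max_left _ _) (Real.exp_pos _).le
      · push_neg at hone
        set m : ℤ := ⌊z.re⌋ with hm
        have hmem' : z - (m:ℂ) ∈ UHP := by
          show 0 < (z - (m:ℂ)).im
          rw [Complex.sub_im, Complex.intCast_im]
          linarith
        have heq : f z = f (z - (m:ℂ)) := by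
          have := hper m (z - (m:ℂ)) hmem'
          rw [sub_add_cancel] at this
          exact this
        have hre : (z - (m:ℂ)).re ∈ Icc (0:ℝ) 1 := by
          rw [Complex.sub_re, Complex.intCast_re]
          constructor
          · linarith [Int.floor_le z.re]
          · linarith [Int.lt_floor_add_one z.re]
        have him : (z - (m:ℂ)).im ∈ Icc (1/2:ℝ) (3/2) := by
          rw [Complex.sub_im, Complex.intCast_im]
          exact ⟨by linarith, by linarith⟩
        calc ‖f z‖ = ‖f (z - (m:ℂ))‖ := by rw [heq]
          _ ≤ M := hM _ hre him
          _ ≤ C2 := le_max_of_le_right (le_max_left M 0)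
          _ = C2 * 1 := (mul_one C2).symm
          _ ≤ C2 * Real.exp (2*π*N*z.im) := mul_le_mul_of_nonneg_left hexp1 hC2
    refine ⟨N, ((k+1)! : ℝ) * 2^(k+1) * (C2 * Real.exp (π * N)), ?_⟩
    intro τ hτ h1
    rw [idw_eqOn f (k+1) hτ]
    exact cauchy_step hdiff hC2 hhalf (k+1) h1
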